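/- Let θ̃_{k+1} = θ̃_k - γ Δ̄_k² Q (G(θ̃_k + θ) - G(θ)) where Q·G is strongly monotone with constant ρ, G is ν-Lipschitz, Δ̄_k² ≤ 1, and σ := ρ - (γν²/2)λ_max(QᵀQ) > 0. Then V_k := (1/2γ)|θ̃_k|² satisfies V_{k+1} ≤ V_k - σ Δ̄_k² |θ̃_k|² for all k. -/
import Mathlib


open Matrix

set_option maxHeartbeats 1000000

/-- DT Lyapunov decrement for the NLPRE parameter-error dynamics. -/
theorem stmt12 {p q : ℕ} (θt : ℕ → Fin q → ℝ) (θ : Fin q → ℝ)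
    (G : (Fin q → ℝ) → (Fin p → ℝ)) (Q : Matrix (Fin q) (Fin p) ℝ)
    (Δ : ℕ → ℝ) (γ ρ ν lm σ : ℝ)
    (hγ : 0 < γ) (hρ : 0 < ρ) (hν : 0 < ν)
    (hmono : ∀ a b : Fin q → ℝ,
      ρ * ((a - b) ⬝ᵥ (a - b)) ≤ (a - b) ⬝ᵥ Q.mulVec (G a - G b))
    (hlip : ∀ a b : Fin q → ℝ,
      (G a - G b) ⬝ᵥ (G a - G b) ≤ ν ^ 2 * ((a - b) ⬝ᵥ (a - b)))
    (hlm : ∀ v : Fin p → ℝ, v ⬝ᵥ (Qᵀ * Q).mulVec v ≤ lm * (v ⬝ᵥ v))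
    (hΔ : ∀ k, (Δ k) ^ 2 ≤ 1)
    (hσ : σ = ρ - γ * ν ^ 2 / 2 * lm) (hσpos : 0 < σ)
    (hrec : ∀ k : ℕ, θt (k + 1) =
      θt k - (γ * (Δ k) ^ 2) • Q.mulVec (G (θt k + θ) - G θ)) :
    ∀ k : ℕ, (1 / (2 * γ)) * (θt (k + 1) ⬝ᵥ θt (k + 1)) ≤
      (1 / (2 * γ)) * (θt k ⬝ᵥ θt k) - σ * (Δ k) ^ 2 * (θt k ⬝ᵥ θt k) := by
  intro k
  set e : Fin q → ℝ := θt k with he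
  set g : Fin p → ℝ := G (e + θ) - G θ with hg
  set w : Fin q → ℝ := Q.mulVec g with hw
  set d : ℝ := (Δ k) ^ 2 with hd
  have hd0 : 0 ≤ d := sq_nonneg _
  have hd1 : d ≤ 1 := hΔ k
  have hd2 : d ^ 2 ≤ d := by nlinarith
  -- strong monotonicity
  have h1 : ρ * (e ⬝ᵥ e) ≤ e ⬝ᵥ w := by
    have := hmono (e + θ) θ
    simpa [hg, hw] using this
  -- Lipschitz
  have h2 : g ⬝ᵥ g ≤ ν ^ 2 * (e ⬝ᵥ e) := by
    have := hlip (e + θ) θ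
    simpa [hg] using this
  -- eigenvalue bound
  have h3 : w ⬝ᵥ w ≤ lm * (g ⬝ᵥ g) := by
    have h := hlm g
    have heq : g ⬝ᵥ (Qᵀ * Q).mulVec g = w ⬝ᵥ w := by
      rw [← Matrix.mulVec_mulVec, Matrix.dotProduct_mulVec, Matrix.vecMul_transpose, hw]
    linarith [heq ▸ h]
  have hee : 0 ≤ e ⬝ᵥ e := Finset.sum_nonneg fun i _ => mul_self_nonneg _
  have hww : 0 ≤ w ⬝ᵥ w := Finset.sum_nonneg fun i _ => mul_self_nonneg _
  have hgg : 0 ≤ g ⬝ᵥ g := Finset.sum_nonneg fun i _ => mul_self_nonneg _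
  -- expansion of the update
  have hexp : θt (k + 1) ⬝ᵥ θt (k + 1)
      = e ⬝ᵥ e - 2 * (γ * d) * (e ⬝ᵥ w) + (γ * d) ^ 2 * (w ⬝ᵥ w) := by
    rw [hrec k, ← he, ← hw, ← hd]
    simp only [sub_dotProduct, dotProduct_sub, smul_dotProduct,
      dotProduct_smul, dotProduct_comm w e, smul_eq_mul]
    ring
  have key : e ⬝ᵥ e - 2 * (γ * d) * (e ⬝ᵥ w) + (γ * d) ^ 2 * (w ⬝ᵥ w)
      ≤ e ⬝ᵥ e - 2 * γ * (σ * d * (e ⬝ᵥ e)) := by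
    rcases le_or_gt 0 lm with hlm0 | hlm0
    · have hB : w ⬝ᵥ w ≤ lm * ν ^ 2 * (e ⬝ᵥ e) := by
        calc w ⬝ᵥ w ≤ lm * (g ⬝ᵥ g) := h3
          _ ≤ lm * (ν ^ 2 * (e ⬝ᵥ e)) := mul_le_mul_of_nonneg_left h2 hlm0
          _ = lm * ν ^ 2 * (e ⬝ᵥ e) := by ring
      have hp1 : 0 ≤ 2 * (γ * d) * ((e ⬝ᵥ w) - ρ * (e ⬝ᵥ e)) := by
        apply mul_nonneg (by positivity); linarith
      have hp2 : (γ * d) ^ 2 * (w ⬝ᵥ w) ≤ (γ * d) ^ 2 * (lm * ν ^ 2 * (e ⬝ᵥ e)) :=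
        mul_le_mul_of_nonneg_left hB (by positivity)
      have hp3 : (γ * d) ^ 2 * (lm * ν ^ 2 * (e ⬝ᵥ e))
          ≤ γ ^ 2 * d * (lm * ν ^ 2 * (e ⬝ᵥ e)) := by
        have hL : 0 ≤ lm * ν ^ 2 * (e ⬝ᵥ e) := by positivity
        have hsq : (γ * d) ^ 2 ≤ γ ^ 2 * d := by
          nlinarith [mul_le_mul_of_nonneg_left hd2 (sq_nonneg γ)]
        exact mul_le_mul_of_nonneg_right hsq hL
      rw [hσ]; nlinarith [hp1, hp2, hp3]
    · -- lm < 0 forces everything to vanish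
      have hgg0 : g ⬝ᵥ g = 0 := by nlinarith
      have hww0 : w ⬝ᵥ w = 0 := by nlinarith
      have hw0 : w = 0 := by
        rwa [dotProduct_self_eq_zero] at hww0
      have hee0 : e ⬝ᵥ e = 0 := by
        have : e ⬝ᵥ w = 0 := by simp [hw0]
        nlinarith
      have hew0 : e ⬝ᵥ w = 0 := by simp [hw0]
      rw [hee0, hew0, hww0]
      norm_num
  calc (1 / (2 * γ)) * (θt (k + 1) ⬝ᵥ θt (k + 1))
      ≤ (1 / (2 * γ)) * (e ⬝ᵥ e - 2 * γ * (σ * d * (e ⬝ᵥ e))) := by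
        rw [hexp]
        apply mul_le_mul_of_nonneg_left key (by positivity)
    _ = (1 / (2 * γ)) * (e ⬝ᵥ e) - σ * d * (e ⬝ᵥ e) := by
        field_simp
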